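/- (Co-coercivity) Let E be a real inner product space and f : E → ℝ convex and differentiable with β-Lipschitz gradient (β > 0). Then for all x, y ∈ E, ⟨∇f(x) − ∇f(y), x − y⟩ ≥ (1/β)·‖∇f(x) − ∇f(y)‖². -/

import Mathlib

open scoped RealInnerProductSpace

private lemma line_hasDerivAt {E : Type*} [NormedAddCommGroup E] [InnerProductSpace ℝ E]
    [CompleteSpace E] (f : E → ℝ) (hdiff : Differentiable ℝ f) (x d : E) (t : ℝ) :
    HasDerivAt (fun s : ℝ => f (x + s • d)) ⟪gradient f (x + t • d), d⟫ t := by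
  have h1 : HasFDerivAt f (InnerProductSpace.toDual ℝ E (gradient f (x + t • d))) (x + t • d) :=
    hasGradientAt_iff_hasFDerivAt.mp (hdiff (x + t • d)).hasGradientAt
  have h2 : HasDerivAt (fun s : ℝ => x + s • d) d t := by
    simpa using ((hasDerivAt_id t).smul_const d).const_add x
  have := h1.comp_hasDerivAt t h2
  simp only [InnerProductSpace.toDual_apply_apply] at this
  exact this

/-- Convexity gradient inequality. -/
private lemma grad_lower {E : Type*} [NormedAddCommGroup E] [InnerProductSpace ℝ E]
    [CompleteSpace E] (f : E → ℝ) (hconv : ConvexOn ℝ Set.univ f)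
    (hdiff : Differentiable ℝ f) (x y : E) :
    f x + ⟪gradient f x, y - x⟫ ≤ f y := by
  set g : ℝ → ℝ := fun s => f (x + s • (y - x)) with hg
  have hgc : ConvexOn ℝ Set.univ g := by
    have := hconv.comp_affineMap (AffineMap.lineMap x y : ℝ →ᵃ[ℝ] E)
    have heq : ∀ s : ℝ, g s = f ((AffineMap.lineMap x y : ℝ →ᵃ[ℝ] E) s) := by
      intro s
      simp [g, AffineMap.lineMap_apply, add_comm]
    rw [funext heq]
    exact this
  have hd0 : HasDerivAt g ⟪gradient f x, y - x⟫ 0 := by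
    simpa using line_hasDerivAt f hdiff x (y - x) 0
  have hslope := hgc.le_slope_of_hasDerivAt (Set.mem_univ 0) (Set.mem_univ 1)
    one_pos hd0
  have : ⟪gradient f x, y - x⟫ ≤ g 1 - g 0 := by
    simpa [slope_def_field] using hslope
  have hg1 : g 1 = f y := by simp [g]
  have hg0 : g 0 = f x := by simp [g]
  rw [hg1, hg0] at this
  linarith

/-- Descent lemma. -/
private lemma descent {E : Type*} [NormedAddCommGroup E] [InnerProductSpace ℝ E]
    [CompleteSpace E] (f : E → ℝ) (β : ℝ) (hβ : 0 < β)
    (hdiff : Differentiable ℝ f)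
    (hsmooth : ∀ x y, ‖gradient f x - gradient f y‖ ≤ β * ‖x - y‖) (x y : E) :
    f y ≤ f x + ⟪gradient f x, y - x⟫ + β / 2 * ‖y - x‖ ^ 2 := by
  set d := y - x with hd
  set h : ℝ → ℝ := fun t => f (x + t • d) - t * ⟪gradient f x, d⟫ - β / 2 * ‖d‖ ^ 2 * t ^ 2
    with hh
  have hder : ∀ t : ℝ, HasDerivAt h
      (⟪gradient f (x + t • d), d⟫ - ⟪gradient f x, d⟫ - β * ‖d‖ ^ 2 * t) t := by
    intro t
    have h1 := line_hasDerivAt f hdiff x d t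
    have h2 : HasDerivAt (fun t : ℝ => t * ⟪gradient f x, d⟫) ⟪gradient f x, d⟫ t := by
      simpa using (hasDerivAt_id t).mul_const (⟪gradient f x, d⟫)
    have h3 : HasDerivAt (fun t : ℝ => β / 2 * ‖d‖ ^ 2 * t ^ 2) (β * ‖d‖ ^ 2 * t) t := by
      have := (hasDerivAt_pow 2 t).const_mul (β / 2 * ‖d‖ ^ 2)
      refine this.congr_deriv ?_
      ring
    exact (h1.sub h2).sub h3
  have hanti : AntitoneOn h (Set.Icc 0 1) := by
    apply antitoneOn_of_deriv_nonpos (convex_Icc 0 1)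
    · exact fun t _ => ((hder t).continuousAt).continuousWithinAt
    · exact fun t _ => ((hder t).differentiableAt).differentiableWithinAt
    · intro t ht
      rw [interior_Icc] at ht
      rw [(hder t).deriv]
      have hb : ⟪gradient f (x + t • d) - gradient f x, d⟫
          ≤ ‖gradient f (x + t • d) - gradient f x‖ * ‖d‖ := real_inner_le_norm _ _
      have hl : ‖gradient f (x + t • d) - gradient f x‖ ≤ β * ‖t • d‖ := by
        simpa using hsmooth (x + t • d) x
      have hts : ‖t • d‖ = t * ‖d‖ := by
        rw [norm_smul, Real.norm_eq_abs, abs_of_nonneg ht.1.le]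
      have : ⟪gradient f (x + t • d), d⟫ - ⟪gradient f x, d⟫
          ≤ β * ‖d‖ ^ 2 * t := by
        have := hb.trans (mul_le_mul_of_nonneg_right hl (norm_nonneg d))
        rw [hts] at this
        rw [← inner_sub_left]
        nlinarith [norm_nonneg d]
      linarith
  have h10 := hanti (Set.left_mem_Icc.mpr zero_le_one) (Set.right_mem_Icc.mpr zero_le_one)
    zero_le_one
  have h0 : h 0 = f x := by simp [h]
  have h1 : h 1 = f y - ⟪gradient f x, d⟫ - β / 2 * ‖d‖ ^ 2 := by
    have hxd : x + (1:ℝ) • d = y := by rw [hd]; simp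
    simp only [h, hxd, one_pow, mul_one, one_mul]
  rw [h0, h1] at h10
  linarith

private lemma key_step {E : Type*} [NormedAddCommGroup E] [InnerProductSpace ℝ E]
    [CompleteSpace E] (f : E → ℝ) (β : ℝ) (hβ : 0 < β)
    (hconv : ConvexOn ℝ Set.univ f) (hdiff : Differentiable ℝ f)
    (hsmooth : ∀ x y, ‖gradient f x - gradient f y‖ ≤ β * ‖x - y‖) (x y : E) :
    f x + ⟪gradient f x, y - x⟫ + 1 / (2 * β) * ‖gradient f y - gradient f x‖ ^ 2 ≤ f y := by
  set a := gradient f x with ha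
  set u := gradient f y - a with hu
  set z := y - (1 / β) • u with hz
  have h1 : f x - ⟪a, x⟫ ≤ f z - ⟪a, z⟫ := by
    have := grad_lower f hconv hdiff x z
    rw [inner_sub_right] at this
    linarith
  have h2 : f z ≤ f y + ⟪gradient f y, z - y⟫ + β / 2 * ‖z - y‖ ^ 2 :=
    descent f β hβ hdiff hsmooth y z
  have hzy : z - y = -((1 / β) • u) := by rw [hz]; abel
  have hnorm : ‖z - y‖ ^ 2 = (1 / β) ^ 2 * ‖u‖ ^ 2 := by
    rw [hzy, norm_neg, norm_smul, Real.norm_eq_abs, abs_of_pos (by positivity), mul_pow]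
  have hinner : ⟪gradient f y, z - y⟫ = -(1 / β) * ⟪gradient f y, u⟫ := by
    rw [hzy, inner_neg_right, inner_smul_right]
    ring
  have hgyu : ⟪gradient f y, u⟫ = ⟪a, u⟫ + ‖u‖ ^ 2 := by
    have : gradient f y = a + u := by rw [hu]; abel
    rw [this, inner_add_left, real_inner_self_eq_norm_sq]
  have hiz : ⟪a, z⟫ = ⟪a, y⟫ - (1 / β) * ⟪a, u⟫ := by
    rw [hz, inner_sub_right, inner_smul_right]
  have hβ' : β ≠ 0 := hβ.ne'
  have hcomb : f x - ⟪a, x⟫ ≤ f y - ⟪a, y⟫ - 1 / (2 * β) * ‖u‖ ^ 2 := by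
    have := h1.trans (by linarith : f z - ⟪a, z⟫ ≤
      f y + ⟪gradient f y, z - y⟫ + β / 2 * ‖z - y‖ ^ 2 - ⟪a, z⟫)
    rw [hinner, hnorm, hgyu, hiz] at this
    have heq : f y + -(1 / β) * (⟪a, u⟫ + ‖u‖ ^ 2) + β / 2 * ((1 / β) ^ 2 * ‖u‖ ^ 2)
        - (⟪a, y⟫ - (1 / β) * ⟪a, u⟫) = f y - ⟪a, y⟫ - 1 / (2 * β) * ‖u‖ ^ 2 := by
      field_simp
      ring
    linarith [heq ▸ this]
  have : ⟪a, y - x⟫ = ⟪a, y⟫ - ⟪a, x⟫ := inner_sub_right _ _ _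
  linarith

/-- Co-coercivity: for a convex differentiable `f` with β-Lipschitz gradient
(β > 0) on a real inner product space,
`⟪∇f(x) - ∇f(y), x - y⟫ ≥ (1/β) ‖∇f(x) - ∇f(y)‖²`. -/
theorem cocoercivity_of_convex_smooth
    {E : Type*} [NormedAddCommGroup E] [InnerProductSpace ℝ E] [CompleteSpace E]
    (f : E → ℝ) (β : ℝ) (hβ : 0 < β)
    (hconv : ConvexOn ℝ Set.univ f)
    (hdiff : Differentiable ℝ f)
    (hsmooth : ∀ x y, ‖gradient f x - gradient f y‖ ≤ β * ‖x - y‖) :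
    ∀ x y : E, (1 / β) * ‖gradient f x - gradient f y‖ ^ 2
        ≤ ⟪gradient f x - gradient f y, x - y⟫ := by
  intro x y
  have h1 := key_step f β hβ hconv hdiff hsmooth x y
  have h2 := key_step f β hβ hconv hdiff hsmooth y x
  have hn : ‖gradient f x - gradient f y‖ = ‖gradient f y - gradient f x‖ := by
    rw [norm_sub_rev]
  have e1 : ⟪gradient f x - gradient f y, x - y⟫
      = ⟪gradient f x, x - y⟫ - ⟪gradient f y, x - y⟫ := inner_sub_left _ _ _
  have e2 : ⟪gradient f x, x - y⟫ = -⟪gradient f x, y - x⟫ := by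
    rw [← inner_neg_right]; congr 1; abel
  have e3 : ⟪gradient f y, x - y⟫ = ⟪gradient f y, x - y⟫ := rfl
  have hββ : 1 / β = 1 / (2 * β) + 1 / (2 * β) := by field_simp; ring
  have hn2 : ‖gradient f x - gradient f y‖ ^ 2 = ‖gradient f y - gradient f x‖ ^ 2 := by
    rw [hn]
  rw [hn2] at h2
  rw [e1, e2, hββ, hn2]
  linarith
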